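/- Let A ∈ ℝ^{m×n}, C ∈ ℝ^{m×k}, b ∈ ℝ^m, and σ ∈ ℕ. Then the infimum of ‖Ax + Cλ − b‖ over all x ∈ ℝ^n and λ ∈ ℝ^k with |supp(x)| ≤ σ is attained: there exist x* ∈ ℝ^n with |supp(x*)| ≤ σ and λ* ∈ ℝ^k achieving this infimum. -/

import Mathlib

section aux

variable {m n k : ℕ} (A : Matrix (Fin m) (Fin n) ℝ) (C : Matrix (Fin m) (Fin k) ℝ)

/-- masking linear map -/
noncomputable def maskMap (S : Finset (Fin n)) : (Fin n → ℝ) →ₗ[ℝ] (Fin n → ℝ) :=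
  LinearMap.pi (fun i => if i ∈ S then LinearMap.proj i else 0)

lemma maskMap_apply (S : Finset (Fin n)) (x : Fin n → ℝ) (i : Fin n) :
    maskMap S x i = if i ∈ S then x i else 0 := by
  simp only [maskMap, LinearMap.pi_apply]
  split <;> simp

noncomputable def WS (S : Finset (Fin n)) : Submodule ℝ (Fin m → ℝ) :=
  LinearMap.range ((A.mulVecLin.comp (maskMap S)).coprod C.mulVecLin)

end aux

theorem stmt14 {m n k : ℕ} (A : Matrix (Fin m) (Fin n) ℝ)
    (C : Matrix (Fin m) (Fin k) ℝ) (b : Fin m → ℝ) (σ : ℕ) :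
    ∃ (x : Fin n → ℝ) (lam : Fin k → ℝ),
      Set.ncard {i | x i ≠ 0} ≤ σ ∧
      ∀ (x' : Fin n → ℝ) (lam' : Fin k → ℝ), Set.ncard {i | x' i ≠ 0} ≤ σ →
        Real.sqrt (∑ r, (A.mulVec x r + C.mulVec lam r - b r) ^ 2) ≤
          Real.sqrt (∑ r, (A.mulVec x' r + C.mulVec lam' r - b r) ^ 2) := by
  classical
  set T : Set (Fin m → ℝ) :=
    {z | ∃ x lam, Set.ncard {i | x i ≠ 0} ≤ σ ∧ z = A.mulVec x + C.mulVec lam} with hT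
  set g : (Fin m → ℝ) → ℝ := fun z => Real.sqrt (∑ r, (z r - b r) ^ 2) with hg
  have hgcont : Continuous g := by
    apply Real.continuous_sqrt.comp
    exact continuous_finset_sum _ fun r _ => by fun_prop
  -- T is a finite union of submodule ranges
  have hTeq : T = ⋃ (S : {S : Finset (Fin n) // S.card ≤ σ}),
      ((WS A C S.1 : Submodule ℝ (Fin m → ℝ)) : Set (Fin m → ℝ)) := by
    ext z
    simp only [Set.mem_iUnion, hT, Set.mem_setOf_eq, SetLike.mem_coe]
    constructor
    · rintro ⟨x, lam, hx, rfl⟩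
      have hfin : {i | x i ≠ 0}.Finite := Set.toFinite _
      have hmask : maskMap hfin.toFinset x = x := by
        funext i
        rw [maskMap_apply]
        split_ifs with h
        · rfl
        · simp only [Set.Finite.mem_toFinset, Set.mem_setOf_eq, not_not] at h
          exact h.symm
      refine ⟨⟨hfin.toFinset, ?_⟩, ⟨(x, lam), ?_⟩⟩
      · rwa [← Set.ncard_eq_toFinset_card _ hfin]
      · simp only [LinearMap.coprod_apply, LinearMap.comp_apply, Matrix.mulVecLin_apply, hmask]
    · rintro ⟨⟨S, hS⟩, ⟨⟨x, lam⟩, rfl⟩⟩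
      refine ⟨maskMap S x, lam, ?_, ?_⟩
      · calc Set.ncard {i | maskMap S x i ≠ 0}
            ≤ Set.ncard (S : Set (Fin n)) := by
              apply Set.ncard_le_ncard _ (Set.toFinite _)
              intro i hi
              by_contra h
              have h0 : maskMap S x i = 0 := by
                rw [maskMap_apply, if_neg (by simpa using h)]
              exact hi h0
          _ ≤ σ := by rwa [Set.ncard_coe_finset]
      · simp [Matrix.mulVecLin_apply]
  have hTclosed : IsClosed T := by
    rw [hTeq]
    exact isClosed_iUnion_of_finite fun S => (WS A C S.1).closed_of_finiteDimensional
  have h0T : (0 : Fin m → ℝ) ∈ T := ⟨0, 0, by simp, by simp⟩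
  -- compact sublevel set
  set K : Set (Fin m → ℝ) := {z ∈ T | g z ≤ g 0} with hK
  have hKne : K.Nonempty := ⟨0, h0T, le_refl _⟩
  have hKclosed : IsClosed K := hTclosed.inter (isClosed_le hgcont continuous_const)
  have hKbdd : Bornology.IsBounded K := by
    rw [Metric.isBounded_iff_subset_closedBall 0]
    refine ⟨g 0 + ‖b‖, fun z hz => ?_⟩
    rw [Metric.mem_closedBall, dist_zero_right]
    have h0 : (0:ℝ) ≤ g 0 + ‖b‖ := add_nonneg (Real.sqrt_nonneg _) (norm_nonneg _)
    rw [pi_norm_le_iff_of_nonneg h0]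
    intro i
    have h1 : |z i - b i| ≤ g z := by
      rw [← Real.sqrt_sq_eq_abs]
      apply Real.sqrt_le_sqrt
      exact Finset.single_le_sum (f := fun r => (z r - b r)^2) (fun r _ => sq_nonneg _) (Finset.mem_univ i)
    have h2 : |b i| ≤ ‖b‖ := norm_le_pi_norm b i
    calc ‖z i‖ = |z i| := rfl
      _ ≤ |z i - b i| + |b i| := by
          have := abs_add_le (z i - b i) (b i); simpa using this
      _ ≤ g z + ‖b‖ := add_le_add h1 h2
      _ ≤ g 0 + ‖b‖ := add_le_add_left hz.2 _
  have hKcompact : IsCompact K := Metric.isCompact_of_isClosed_isBounded hKclosed hKbdd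
  obtain ⟨z, hzK, hzmin⟩ := hKcompact.exists_isMinOn hKne hgcont.continuousOn
  obtain ⟨x, lam, hx, hzx⟩ := hzK.1
  refine ⟨x, lam, hx, fun x' lam' hx' => ?_⟩
  have hz' : A.mulVec x' + C.mulVec lam' ∈ T := ⟨x', lam', hx', rfl⟩
  have key : g z ≤ g (A.mulVec x' + C.mulVec lam') := by
    by_cases h : g (A.mulVec x' + C.mulVec lam') ≤ g 0
    · exact hzmin ⟨hz', h⟩
    · exact le_trans (hzmin ⟨h0T, le_refl _⟩) (le_of_not_ge h)
  have e1 : g z = Real.sqrt (∑ r, (A.mulVec x r + C.mulVec lam r - b r) ^ 2) := by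
    rw [hzx]; rfl
  have e2 : g (A.mulVec x' + C.mulVec lam')
      = Real.sqrt (∑ r, (A.mulVec x' r + C.mulVec lam' r - b r) ^ 2) := rfl
  rw [← e1, ← e2]
  exact key
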